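/- For j∈ℕ let m(j)=⌊φj⌋−j+1, and define f(n)=b(n), g(n)=b(n)−1, h(n)=2a(n)+n for n∈ℕ. Then for every k∈ℕ: (i) m(f(a(k))) = b(k); (ii) m(f(b(k))) + 1 = b(a(k)+1); (iii) m(g(a(k))) + 1 = b(k); (iv) m(g(b(k))) + 2 = b(a(k)+1); (v) m(h(a(k))) + 3 = b(a(k)+1); (vi) m(h(b(k))) + 2 = b(b(k)+1). -/

import Mathlib

/-- The golden ratio φ = (1 + √5)/2. -/
noncomputable def phi : ℝ := (1 + Real.sqrt 5) / 2

/-- The lower Wythoff sequence a(n) = ⌊nφ⌋. -/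
noncomputable def wa (n : ℕ) : ℕ := ⌊(n : ℝ) * phi⌋₊

/-- The upper Wythoff sequence b(n) = ⌊nφ²⌋. -/
noncomputable def wb (n : ℕ) : ℕ := ⌊(n : ℝ) * phi ^ 2⌋₊

/-- m(j) = ⌊φj⌋ − j + 1. -/
noncomputable def mfun (j : ℕ) : ℤ := (wa j : ℤ) - (j : ℤ) + 1

/-- f(n) = b(n). -/
noncomputable def f (n : ℕ) : ℕ := wb n

/-- g(n) = b(n) − 1. -/
noncomputable def g (n : ℕ) : ℕ := wb n - 1

/-- h(n) = 2a(n) + n. -/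
noncomputable def h (n : ℕ) : ℕ := 2 * wa n + n

lemma phi_eq : phi = Real.goldenRatio := rfl

lemma phi_sq : phi ^ 2 = phi + 1 := by rw [phi_eq]; exact Real.goldenRatio_sq

lemma one_lt_phi : 1 < phi := by rw [phi_eq]; exact Real.one_lt_goldenRatio

lemma phi_lt_two : phi < 2 := by rw [phi_eq]; exact Real.goldenRatio_lt_two

lemma phi_pos : 0 < phi := lt_trans one_pos one_lt_phi

lemma wa_lt (n : ℕ) (hn : 1 ≤ n) : (wa n : ℝ) < n * phi := by
  refine (Nat.floor_le (mul_nonneg (Nat.cast_nonneg n) phi_pos.le)).lt_of_ne ?_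
  intro hEq
  have : Irrational ((n : ℝ) * phi) := by
    rw [phi_eq]; exact Real.goldenRatio_irrational.natCast_mul (by omega)
  exact (this.ne_nat (wa n)) hEq.symm

lemma lt_wa (n : ℕ) : (n : ℝ) * phi < wa n + 1 :=
  Nat.lt_floor_add_one _

lemma wa_pos (n : ℕ) (hn : 1 ≤ n) : 1 ≤ wa n := by
  have : (1 : ℝ) ≤ n * phi := by
    have := one_lt_phi
    have : (1:ℝ) ≤ (n:ℝ) := by exact_mod_cast hn
    nlinarith [one_lt_phi]
  exact Nat.le_floor (by exact_mod_cast this)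

lemma wb_eq (n : ℕ) : wb n = wa n + n := by
  unfold wb wa
  have : (n : ℝ) * phi ^ 2 = n * phi + n := by rw [phi_sq]; ring
  rw [this, Nat.floor_add_natCast (mul_nonneg (Nat.cast_nonneg n) phi_pos.le)]

lemma key (n : ℕ) (hn : 1 ≤ n) :
    wa (wa n) + 1 = wa n + n ∧ wa (wa n + 1) = wa n + n + 1 ∧
    wa (wa n + n) = 2 * wa n + n ∧ wa (wa n + n + 1) = 2 * wa n + n + 1 := by
  have h1 := wa_lt n hn
  have h2 := lt_wa n
  have hφ1 := one_lt_phi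
  have hφ2 := phi_lt_two
  have hsq : phi * phi = phi + 1 := by have := phi_sq; nlinarith [phi_sq]
  set A : ℕ := wa n with hA
  have hA1 : 1 ≤ A := wa_pos n hn
  have hn1 : (1:ℝ) ≤ (n:ℝ) := by exact_mod_cast hn
  -- wa A = A + n - 1, stated as wa A = A + (n-1)
  have e1 : wa A = A + n - 1 := by
    have : wa A = (A + n - 1 : ℕ) := by
      unfold wa
      rw [Nat.floor_eq_iff (mul_nonneg (Nat.cast_nonneg _) phi_pos.le)]
      have hc : ((A + n - 1 : ℕ) : ℝ) = (A:ℝ) + n - 1 := by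
        push_cast [Nat.cast_sub (by omega : 1 ≤ A + n)]; ring
      rw [hc]
      constructor <;> nlinarith
    exact this
  have e2 : wa (A + 1) = A + n + 1 := by
    unfold wa
    rw [Nat.floor_eq_iff (mul_nonneg (Nat.cast_nonneg _) phi_pos.le)]
    push_cast
    constructor <;> nlinarith
  have e3 : wa (A + n) = 2 * A + n := by
    unfold wa
    rw [Nat.floor_eq_iff (mul_nonneg (Nat.cast_nonneg _) phi_pos.le)]
    push_cast
    constructor <;> nlinarith
  have e4 : wa (A + n + 1) = 2 * A + n + 1 := by
    unfold wa
    rw [Nat.floor_eq_iff (mul_nonneg (Nat.cast_nonneg _) phi_pos.le)]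
    push_cast
    constructor <;> nlinarith
  refine ⟨by omega, e2, e3, e4⟩

attribute [irreducible] phi wa wb


theorem stmt_18 (k : ℕ) (hk : 0 < k) :
    mfun (f (wa k)) = (wb k : ℤ) ∧
    mfun (f (wb k)) + 1 = (wb (wa k + 1) : ℤ) ∧
    mfun (g (wa k)) + 1 = (wb k : ℤ) ∧
    mfun (g (wb k)) + 2 = (wb (wa k + 1) : ℤ) ∧
    mfun (h (wa k)) + 3 = (wb (wa k + 1) : ℤ) ∧
    mfun (h (wb k)) + 2 = (wb (wb k + 1) : ℤ) := by
  have hk1 : 1 ≤ k := hk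
  have hA1 : 1 ≤ wa k := wa_pos k hk
  obtain ⟨k1, k2, k3, k4⟩ := key k hk1
  obtain ⟨a1, a2, a3, a4⟩ := key (wa k) hA1
  have hwaA1 : 1 ≤ wa (wa k) := wa_pos _ hA1
  obtain ⟨aa1, aa2, aa3, aa4⟩ := key (wa (wa k)) hwaA1
  have hB1 : 1 ≤ wa k + k := Nat.le_add_right_of_le hA1
  obtain ⟨b1, b2, b3, b4⟩ := key (wa k + k) hB1
  have hC1 : 1 ≤ wa (wa k) + wa k := Nat.le_add_right_of_le hwaA1
  obtain ⟨c1, c2, c3, c4⟩ := key (wa (wa k) + wa k) hC1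
  obtain ⟨e1', e2', e3', e4'⟩ := key (wa (wa k + k)) (wa_pos _ hB1)
  have hD1 : 1 ≤ wa (wa k + k) + (wa k + k) := Nat.le_add_right_of_le (wa_pos _ hB1)
  obtain ⟨d1, d2, d3, d4⟩ := key (wa (wa k + k) + (wa k + k)) hD1
  simp only [mfun, f, g, h, wb_eq]
  rw [show wa (wa k) + wa k - 1 = wa (wa (wa k)) from by rw [← a1, Nat.add_sub_cancel],
      show wa (wa k + k) + (wa k + k) - 1 = wa (wa (wa k + k)) from by rw [← b1, Nat.add_sub_cancel],
      show 2 * wa (wa k) + wa k = wa (wa (wa k) + wa k) from a3.symm,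
      show 2 * wa (wa k + k) + (wa k + k) = wa (wa (wa k + k) + (wa k + k)) from b3.symm]
  zify at k1 k2 k3 k4 a1 a2 a3 a4 aa1 aa2 aa3 aa4 b1 b2 b3 b4 c1 c2 c3 c4 d1 d2 d3 d4 e1' e2' e3' e4'
  refine ⟨?_, ?_, ?_, ?_, ?_, ?_⟩ <;> push_cast <;> linarith
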